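/- On the elliptic curve $y^2 + w^2(x+1)y = x(x+1)(x+w^2)$ over $\mathbb{Q}(w)$, the point $(-w^2, 0)$ has exact order $6$. -/

import Mathlib

noncomputable section

/-- The elliptic curve `y² + w²(x+1)y = x(x+1)(x+w²)` over `ℚ(w)`. -/
def W17 : WeierstrassCurve.Affine (RatFunc ℚ) :=
  { a₁ := RatFunc.X ^ 2, a₂ := 1 + RatFunc.X ^ 2, a₃ := RatFunc.X ^ 2,
    a₄ := RatFunc.X ^ 2, a₆ := 0 }

open WeierstrassCurve.Affine
open Classical

lemma some_eq_some' {F : Type*} [Field F] {W : WeierstrassCurve.Affine F}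
    {x₁ y₁ x₂ y₂ : F} (h₁ : W.Nonsingular x₁ y₁) (h₂ : W.Nonsingular x₂ y₂)
    (hx : x₁ = x₂) (hy : y₁ = y₂) :
    WeierstrassCurve.Affine.Point.some _ _ h₁ = WeierstrassCurve.Affine.Point.some _ _ h₂ := by
  subst hx; subst hy; rfl

lemma hX0 : (RatFunc.X : RatFunc ℚ) ≠ 0 := RatFunc.X_ne_zero

lemma hX1 : (RatFunc.X : RatFunc ℚ) ^ 2 ≠ 1 := by
  intro h
  have : ((Polynomial.X : Polynomial ℚ) ^ 2) = 1 := by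
    apply RatFunc.algebraMap_injective ℚ
    push_cast [map_pow, map_one, RatFunc.algebraMap_X]
    simpa using h
  have := congrArg (fun p => Polynomial.coeff p 2) this
  simp [Polynomial.coeff_one] at this

lemma hXX : (RatFunc.X : RatFunc ℚ) ^ 2 - 1 ≠ 0 := fun h => hX1 (by linear_combination h)

lemma key : (RatFunc.X : RatFunc ℚ) ^ 4 - RatFunc.X ^ 2 ≠ 0 := by
  intro h
  have : (RatFunc.X : RatFunc ℚ) ^ 2 * (RatFunc.X ^ 2 - 1) = 0 := by linear_combination h
  rcases mul_eq_zero.mp this with h' | h'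
  · exact hX0 (pow_eq_zero_iff two_ne_zero |>.mp h')
  · exact hXX h'

lemma hP : W17.Nonsingular (-(RatFunc.X ^ 2)) 0 := by
  rw [nonsingular_iff', equation_iff']
  refine ⟨by simp only [W17]; ring, Or.inr ?_⟩
  simp only [W17]
  intro h
  exact key (by linear_combination -h)

lemma h2pt : W17.Nonsingular 0 0 := by
  rw [nonsingular_iff', equation_iff']
  refine ⟨by simp only [W17]; ring, Or.inr ?_⟩
  simp only [W17]
  intro h
  exact hX0 (pow_eq_zero_iff two_ne_zero |>.mp (by linear_combination h))

lemma h3pt : W17.Nonsingular (-1) 0 := by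
  rw [nonsingular_iff', equation_iff']
  refine ⟨by simp only [W17]; ring, Or.inl ?_⟩
  simp only [W17]
  intro h
  exact hXX (by linear_combination h)

lemma hyne : (0 : RatFunc ℚ) ≠ W17.negY (-(RatFunc.X ^ 2)) 0 := by
  simp only [negY, W17]
  intro h
  exact key (by linear_combination -h)

lemma slope1 : W17.slope (-(RatFunc.X ^ 2)) (-(RatFunc.X ^ 2)) 0 0 = -1 := by
  rw [slope_of_Y_ne rfl hyne]
  simp only [negY, W17]
  rw [div_eq_iff (fun h => key (by linear_combination -h))]
  ring

lemma e2some : Point.some _ _ hP + Point.some _ _ hP = Point.some _ _ h2pt := by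
  rw [Point.add_self_of_Y_ne hyne]
  refine some_eq_some' _ _ ?_ ?_
  · rw [slope1]; simp only [addX, W17]; ring
  · rw [slope1]; simp only [addY, negAddY, addX, negY, W17]; ring

lemma hx02 : (0 : RatFunc ℚ) ≠ -(RatFunc.X ^ 2) := by
  intro h
  exact hX0 (pow_eq_zero_iff two_ne_zero |>.mp (by linear_combination h))

lemma slope2 : W17.slope 0 (-(RatFunc.X ^ 2)) 0 0 = 0 := by
  rw [slope_of_X_ne hx02]
  simp

lemma e3some : Point.some _ _ h2pt + Point.some _ _ hP = Point.some _ _ h3pt := by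
  rw [Point.add_of_X_ne hx02]
  refine some_eq_some' _ _ ?_ ?_
  · rw [slope2]; simp only [addX, W17]; ring
  · rw [slope2]; simp only [addY, negAddY, addX, negY, W17]; ring

lemma e33 : Point.some _ _ h3pt + Point.some _ _ h3pt = 0 :=
  Point.add_of_Y_eq rfl (by simp only [negY, W17]; ring)

open Classical in
/-- The point `(-w², 0)` has exact order 6. -/
theorem stmt17 :
    ∃ h : W17.Nonsingular (-(RatFunc.X ^ 2)) 0,
      addOrderOf (WeierstrassCurve.Affine.Point.some _ _ h) = 6 := by
  refine ⟨hP, ?_⟩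
  have s2 : (2 : ℕ) • Point.some _ _ hP = Point.some _ _ h2pt := by
    rw [two_nsmul]; exact e2some
  have s3 : (3 : ℕ) • Point.some _ _ hP = Point.some _ _ h3pt := by
    rw [show (3 : ℕ) = 2 + 1 from rfl, add_nsmul, one_nsmul, s2]; exact e3some
  have s6 : (6 : ℕ) • Point.some _ _ hP = 0 := by
    rw [show (6 : ℕ) = 3 + 3 from rfl, add_nsmul, s3]; exact e33
  apply addOrderOf_eq_of_nsmul_and_div_prime_nsmul (by norm_num) s6
  intro p hp hpd
  have hple : p ≤ 6 := Nat.le_of_dvd (by norm_num) hpd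
  have hp2 : 2 ≤ p := hp.two_le
  interval_cases p
  · rw [show (6 / 2 : ℕ) = 3 from rfl, s3]; exact Point.some_ne_zero _
  · rw [show (6 / 3 : ℕ) = 2 from rfl, s2]; exact Point.some_ne_zero _
  · exact absurd hp (by norm_num)
  · exact absurd hpd (by norm_num)
  · exact absurd hp (by norm_num)
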